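/- The error system v̄' = g(e₃ − γ̄) − k₁ᵛ v̄ + k₂ᵛ γ̄ × (γ̄ × v̄), γ̄' = −k₁ʳ γ̄ × (γ̄ × v̄) on ℝ³ × S² has exactly two equilibrium points: (v̄, γ̄) = (0, e₃) and (v̄, γ̄) = ((2g/k₁ᵛ) e₃, −e₃). -/

import Mathlib

open Matrix

noncomputable section

def cross3 (u v : Fin 3 → ℝ) : Fin 3 → ℝ :=
  ![u 1 * v 2 - u 2 * v 1, u 2 * v 0 - u 0 * v 2, u 0 * v 1 - u 1 * v 0]

def norm3 (u : Fin 3 → ℝ) : ℝ := Real.sqrt (u ⬝ᵥ u)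

def e3 : Fin 3 → ℝ := ![0, 0, 1]

/-- the error system has exactly two equilibria on `ℝ³ × S²`:
`(0, e₃)` and `((2g/k₁ᵛ) e₃, −e₃)`. -/
theorem stmt_2 (g k1v k2v k1r : ℝ) (hg : 0 < g) (h1 : 0 < k1v) (h2 : 0 < k2v)
    (h3 : 0 < k1r) :
    ∀ v γ : Fin 3 → ℝ, norm3 γ = 1 →
      ((g • (e3 - γ) - k1v • v + k2v • cross3 γ (cross3 γ v) = 0 ∧
          -(k1r • cross3 γ (cross3 γ v)) = 0) ↔
        ((v = 0 ∧ γ = e3) ∨ (v = (2 * g / k1v) • e3 ∧ γ = -e3))) := by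
  intro v γ hγ
  have hdd : γ ⬝ᵥ γ = 1 := by
    have h0 : (0:ℝ) ≤ γ ⬝ᵥ γ := by
      simp only [dotProduct, Fin.sum_univ_three]
      nlinarith [sq_nonneg (γ 0), sq_nonneg (γ 1), sq_nonneg (γ 2)]
    have := Real.sq_sqrt h0
    unfold norm3 at hγ
    rw [hγ] at this
    nlinarith
  have hn : γ 0 * γ 0 + γ 1 * γ 1 + γ 2 * γ 2 = 1 := by
    simpa [dotProduct, Fin.sum_univ_three] using hdd
  constructor
  · rintro ⟨hA, hB⟩
    have hw : cross3 γ (cross3 γ v) = 0 := by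
      have hk : k1r • cross3 γ (cross3 γ v) = 0 := by
        simpa [neg_eq_zero] using hB
      rcases smul_eq_zero.mp hk with h | h
      · exact absurd h (ne_of_gt h3)
      · exact h
    have hw2 := congrFun hw 2
    simp [cross3] at hw2
    rw [hw] at hA
    have hA0 := congrFun hA 0
    have hA1 := congrFun hA 1
    have hA2 := congrFun hA 2
    simp [e3, Pi.sub_apply, Pi.smul_apply, smul_eq_mul, sub_eq_zero,
      Matrix.vecHead, Matrix.vecTail, Function.comp] at hA0 hA1 hA2
    -- hA0 : -(g * γ 0) = k1v * v 0, hA1 : -(g * γ 1) = k1v * v 1,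
    -- hA2 : g * (1 - γ 2) = k1v * v 2
    have hab : g * (γ 0 * γ 0 + γ 1 * γ 1) = 0 := by
      linear_combination (-k1v) * hw2 - (γ 0 * γ 2) * hA0 - (γ 1 * γ 2) * hA1 +
        (γ 0 * γ 0 + γ 1 * γ 1) * hA2
    have hab' : γ 0 * γ 0 + γ 1 * γ 1 = 0 := by
      rcases mul_eq_zero.mp hab with h | h
      · exact absurd h (ne_of_gt hg)
      · exact h
    have ha : γ 0 = 0 := by nlinarith [mul_self_nonneg (γ 0), mul_self_nonneg (γ 1)]
    have hb : γ 1 = 0 := by nlinarith [mul_self_nonneg (γ 0), mul_self_nonneg (γ 1)]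
    have hc2 : γ 2 * γ 2 = 1 := by nlinarith
    rcases mul_self_eq_one_iff.mp hc2 with hc | hc
    · left
      constructor
      · funext i
        fin_cases i
        · have : k1v * v 0 = 0 := by rw [← hA0, ha]; ring
          simpa [h1.ne'] using (mul_eq_zero.mp this).resolve_left (ne_of_gt h1)
        · have : k1v * v 1 = 0 := by rw [← hA1, hb]; ring
          simpa [h1.ne'] using (mul_eq_zero.mp this).resolve_left (ne_of_gt h1)
        · have : k1v * v 2 = 0 := by rw [← hA2, hc]; ring
          simpa [h1.ne'] using (mul_eq_zero.mp this).resolve_left (ne_of_gt h1)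
      · funext i
        fin_cases i <;> simp [e3, ha, hb, hc]
    · right
      constructor
      · funext i
        fin_cases i
        · have : k1v * v 0 = 0 := by rw [← hA0, ha]; ring
          have hv0 : v 0 = 0 := (mul_eq_zero.mp this).resolve_left (ne_of_gt h1)
          simp [e3, hv0]
        · have : k1v * v 1 = 0 := by rw [← hA1, hb]; ring
          have hv1 : v 1 = 0 := (mul_eq_zero.mp this).resolve_left (ne_of_gt h1)
          simp [e3, hv1]
        · have h2g : k1v * v 2 = 2 * g := by rw [← hA2, hc]; ring
          have hv2 : v 2 = 2 * g / k1v := by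
            field_simp
            linarith [h2g]
          simp [e3, hv2, Pi.smul_apply, smul_eq_mul]
      · funext i
        fin_cases i <;> simp [e3, ha, hb, hc]
  · rintro (⟨hv, hγe⟩ | ⟨hv, hγe⟩) <;> subst hv <;> subst hγe <;>
      refine ⟨?_, ?_⟩ <;> funext i <;> fin_cases i <;>
      simp [cross3, e3, Pi.sub_apply, Pi.smul_apply, smul_eq_mul] <;> ring_nf <;>
      field_simp <;> norm_num
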